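/- Let r be a positive integer and define the extension Q sending a sequence z (defined on multi-indices of length ≤ 2r) to Q(z) defined on multi-indices of length ≤ 4r by Q(z)_{2α} = z_α for every multi-index α of length ≤ 2r, and Q(z)_β = 0 whenever β has at least one odd coordinate. If z is feasible for the level-r Schmüdgen moment relaxation (S-DGW-r), then Q(z) is feasible for the level-2r Putinar moment relaxation (P-DGW-2r) and has the same objective value; consequently val(P-DGW-2r) ≤ val(S-DGW-r). -/

import Mathlib

open MvPolynomial

/-- The Riesz functional associated to a moment sequence `z`. -/
noncomputable def riesz {σ : Type*} (z : (σ →₀ ℕ) → ℝ) (p : MvPolynomial σ ℝ) : ℝ :=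
  ∑ α ∈ p.support, MvPolynomial.coeff α p * z α

/-- The total degree (length) of a multi-index. -/
def mdeg {σ : Type*} (α : σ →₀ ℕ) : ℕ := α.sum fun _ e => e

/-- Positive semidefiniteness of the truncated localizing matrix `M_t(g z)`:
the associated quadratic form is nonnegative on coefficient vectors of
polynomials of degree at most `t`. -/
def locPSD {σ : Type*} (z : (σ →₀ ℕ) → ℝ) (g : MvPolynomial σ ℝ) (t : ℕ) : Prop :=
  ∀ p : MvPolynomial σ ℝ, p.totalDegree ≤ t → 0 ≤ riesz z (g * p ^ 2)

/-- Vanishing of the truncated localizing matrix `M_t(g z)`: all entries are zero. -/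
def locZero {σ : Type*} (z : (σ →₀ ℕ) → ℝ) (g : MvPolynomial σ ℝ) (t : ℕ) : Prop :=
  ∀ α β : σ →₀ ℕ, mdeg α ≤ t → mdeg β ≤ t →
    riesz z (g * monomial α 1 * monomial β 1) = 0

/-- The row-marginal polynomial `r_i(π) = ∑_j π_{ij} - μ_i`. -/
noncomputable def rowPoly (a b : ℕ) (μ : Fin a → ℝ) (i : Fin a) :
    MvPolynomial (Fin a × Fin b) ℝ :=
  (∑ j, X (i, j)) - C (μ i)

/-- The column-marginal polynomial `c_j(π) = ∑_i π_{ij} - ν_j`. -/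
noncomputable def colPoly (a b : ℕ) (ν : Fin b → ℝ) (j : Fin b) :
    MvPolynomial (Fin a × Fin b) ℝ :=
  (∑ i, X (i, j)) - C (ν j)

/-- The monomial `e_I = ∏_{(i,j) ∈ I} π_{ij}`. -/
noncomputable def eI {a b : ℕ} (I : Finset (Fin a × Fin b)) : MvPolynomial (Fin a × Fin b) ℝ :=
  ∏ q ∈ I, X q

/-- A probability vector: nonnegative entries summing to 1. -/
def IsProbVec {a : ℕ} (μ : Fin a → ℝ) : Prop := (∀ i, 0 ≤ μ i) ∧ ∑ i, μ i = 1

/-- Feasibility for the level-`r` Schmüdgen moment relaxation (S-DGW-r). -/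
def SFeas (a b r : ℕ) (μ : Fin a → ℝ) (ν : Fin b → ℝ)
    (z : ((Fin a × Fin b) →₀ ℕ) → ℝ) : Prop :=
  z 0 = 1 ∧
  (∀ I : Finset (Fin a × Fin b), I.card ≤ 2 * r → locPSD z (eI I) (r - (I.card + 1) / 2)) ∧
  (∀ i, locZero z (rowPoly a b μ i) (r - 1)) ∧
  (∀ j, locZero z (colPoly a b ν j) (r - 1)) ∧
  (∀ i₁ i₂ : Fin a, ∀ j : Fin b, locZero z (rowPoly a b μ i₁ * X (i₂, j)) (r - 1)) ∧
  (∀ j₁ j₂ : Fin b, ∀ i : Fin a, locZero z (colPoly a b ν j₁ * X (i, j₂)) (r - 1))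

/-- The objective of the Schmüdgen moment relaxation. -/
noncomputable def objS (a b : ℕ) (L : Fin a → Fin b → Fin a → Fin b → ℝ)
    (z : ((Fin a × Fin b) →₀ ℕ) → ℝ) : ℝ :=
  ∑ i, ∑ j, ∑ k, ∑ l, L i j k l * z (Finsupp.single (i, j) 1 + Finsupp.single (k, l) 1)

/-- The optimal value of the level-`r` Schmüdgen moment relaxation. -/
noncomputable def valS (a b r : ℕ) (μ : Fin a → ℝ) (ν : Fin b → ℝ)
    (L : Fin a → Fin b → Fin a → Fin b → ℝ) : ℝ :=
  sInf {v : ℝ | ∃ z, SFeas a b r μ ν z ∧ v = objS a b L z}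

/-- Feasibility for the level-`s` Putinar moment relaxation (P-DGW-s), in squared variables. -/
def PFeas (a b s : ℕ) (μ : Fin a → ℝ) (ν : Fin b → ℝ)
    (z : ((Fin a × Fin b) →₀ ℕ) → ℝ) : Prop :=
  z 0 = 1 ∧ locPSD z 1 s ∧
  (∀ i, locZero z (C (μ i) - ∑ j, X (i, j) ^ 2) (s - 1)) ∧
  (∀ j, locZero z (C (ν j) - ∑ i, X (i, j) ^ 2) (s - 1))

/-- The objective of the Putinar moment relaxation. -/
noncomputable def objP (a b : ℕ) (L : Fin a → Fin b → Fin a → Fin b → ℝ)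
    (z : ((Fin a × Fin b) →₀ ℕ) → ℝ) : ℝ :=
  ∑ i, ∑ j, ∑ k, ∑ l, L i j k l * z (Finsupp.single (i, j) 2 + Finsupp.single (k, l) 2)

/-- The optimal value of the level-`s` Putinar moment relaxation. -/
noncomputable def valP (a b s : ℕ) (μ : Fin a → ℝ) (ν : Fin b → ℝ)
    (L : Fin a → Fin b → Fin a → Fin b → ℝ) : ℝ :=
  sInf {v : ℝ | ∃ z, PFeas a b s μ ν z ∧ v = objP a b L z}

lemma riesz_def {σ : Type*} (z : (σ →₀ ℕ) → ℝ) (p : MvPolynomial σ ℝ) :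
    riesz z p = Finsupp.sum (AddMonoidAlgebra.coeff p) fun a c => c * z a := rfl

lemma riesz_add {σ : Type*} (z : (σ →₀ ℕ) → ℝ) (p q : MvPolynomial σ ℝ) :
    riesz z (p + q) = riesz z p + riesz z q := by
  simp only [riesz_def, AddMonoidAlgebra.coeff_add]
  exact Finsupp.sum_add_index' (fun a => zero_mul _) (fun a b c => add_mul _ _ _)

lemma riesz_monomial {σ : Type*} (z : (σ →₀ ℕ) → ℝ) (α : σ →₀ ℕ) (c : ℝ) :
    riesz z (monomial α c) = c * z α := by
  rw [riesz_def]
  exact Finsupp.sum_single_index (h := fun a c => c * z a) (zero_mul _)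

lemma riesz_zero {σ : Type*} (z : (σ →₀ ℕ) → ℝ) : riesz z 0 = 0 := by
  simp [riesz_def]

lemma riesz_sum {σ ι : Type*} (z : (σ →₀ ℕ) → ℝ) (s : Finset ι) (f : ι → MvPolynomial σ ℝ) :
    riesz z (∑ i ∈ s, f i) = ∑ i ∈ s, riesz z (f i) := by
  induction s using Finset.cons_induction with
  | empty => simp [riesz_zero]
  | cons a s ha ih => rw [Finset.sum_cons, Finset.sum_cons, riesz_add, ih]

lemma riesz_neg {σ : Type*} (z : (σ →₀ ℕ) → ℝ) (p : MvPolynomial σ ℝ) :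
    riesz z (-p) = - riesz z p := by
  have := riesz_add z p (-p); simp [riesz_zero] at this; linarith

lemma riesz_sub {σ : Type*} (z : (σ →₀ ℕ) → ℝ) (p q : MvPolynomial σ ℝ) :
    riesz z (p - q) = riesz z p - riesz z q := by
  rw [sub_eq_add_neg, riesz_add, riesz_neg]; ring

lemma riesz_congr {σ : Type*} {z w : (σ →₀ ℕ) → ℝ} {p : MvPolynomial σ ℝ}
    (h : ∀ α ∈ p.support, z α = w α) : riesz z p = riesz w p := by
  unfold riesz; exact Finset.sum_congr rfl fun α hα => by rw [h α hα]

lemma riesz_eq_zero {σ : Type*} {z : (σ →₀ ℕ) → ℝ} {p : MvPolynomial σ ℝ}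
    (h : ∀ α ∈ p.support, z α = 0) : riesz z p = 0 := by
  unfold riesz
  exact Finset.sum_eq_zero fun α hα => by rw [h α hα, mul_zero]

lemma mdeg_add {σ : Type*} (a b : σ →₀ ℕ) : mdeg (a + b) = mdeg a + mdeg b :=
  Finsupp.sum_add_index' (fun _ => rfl) (fun _ _ _ => rfl)

lemma mdeg_single {σ : Type*} (q : σ) (k : ℕ) : mdeg (Finsupp.single q k) = k :=
  Finsupp.sum_single_index rfl

lemma mdeg_zero {σ : Type*} : mdeg (0 : σ →₀ ℕ) = 0 := rfl

lemma mdeg_eq_sum {σ : Type*} (α : σ →₀ ℕ) : mdeg α = ∑ q ∈ α.support, α q := rfl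

lemma mdeg_eq_zero {σ : Type*} {α : σ →₀ ℕ} (h : mdeg α = 0) : α = 0 := by
  ext q
  by_cases hq : q ∈ α.support
  · rw [mdeg_eq_sum] at h
    have := Finsupp.mem_support_iff.mp hq
    have h2 := Finset.sum_eq_zero_iff.mp h q hq
    omega
  · simpa using Finsupp.notMem_support_iff.mp hq

lemma le_mdeg_totalDegree {σ : Type*} {p : MvPolynomial σ ℝ} {α : σ →₀ ℕ}
    (h : α ∈ p.support) : mdeg α ≤ p.totalDegree := le_totalDegree h

/-- split lemma -/
lemma mdeg_split {σ : Type*} (t₁ : ℕ) : ∀ (t₂ : ℕ) (η : σ →₀ ℕ), mdeg η ≤ t₁ + t₂ →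
    ∃ η₁ η₂, η = η₁ + η₂ ∧ mdeg η₁ ≤ t₁ ∧ mdeg η₂ ≤ t₂ := by
  induction t₁ with
  | zero => intro t₂ η h; exact ⟨0, η, by simp, by simp [mdeg_zero], by simpa using h⟩
  | succ t ih =>
    intro t₂ η h
    by_cases h' : mdeg η ≤ t + t₂
    · obtain ⟨η₁, η₂, he, h1, h2⟩ := ih t₂ η h'
      exact ⟨η₁, η₂, he, h1.trans (Nat.le_succ t), h2⟩
    · have hne : η ≠ 0 := fun h0 => by simp [h0, mdeg_zero] at h'
      obtain ⟨q, hq⟩ := Finsupp.support_nonempty_iff.mpr hne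
      have hq1 : 1 ≤ η q := Nat.one_le_iff_ne_zero.mpr (Finsupp.mem_support_iff.mp hq)
      set η' := η - Finsupp.single q 1 with hη'
      have heq : η = Finsupp.single q 1 + η' := by
        ext x; simp only [hη', Finsupp.add_apply, Finsupp.tsub_apply, Finsupp.single_apply]
        by_cases hx : q = x
        · subst hx; simp only [Finsupp.single_eq_same]; omega
        · simp [hx]
      have hm : mdeg η = 1 + mdeg η' := by rw [heq, mdeg_add, mdeg_single]
      obtain ⟨η₁, η₂, he, h1, h2⟩ := ih t₂ η' (by omega)
      exact ⟨Finsupp.single q 1 + η₁, η₂, by rw [heq, he, add_assoc],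
        by rw [mdeg_add, mdeg_single]; omega, h2⟩

noncomputable def half {σ : Type*} (β : σ →₀ ℕ) : σ →₀ ℕ := β.mapRange (· / 2) (by norm_num)

lemma half_apply {σ : Type*} (β : σ →₀ ℕ) (q : σ) : half β q = β q / 2 :=
  Finsupp.mapRange_apply

lemma half_double {σ : Type*} (α : σ →₀ ℕ) : half (α + α) = α := by
  ext q; simp [half_apply]; omega

lemma mdeg_half_double {σ : Type*} (α : σ →₀ ℕ) : mdeg (α + α) = 2 * mdeg α := by
  rw [mdeg_add]; omega

open scoped Classical

/-- canonical extension -/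
noncomputable def extz {σ : Type*} (z : (σ →₀ ℕ) → ℝ) (β : σ →₀ ℕ) : ℝ :=
  if ∀ q, β q % 2 = 0 then z (half β) else 0

lemma extz_double {σ : Type*} (z : (σ →₀ ℕ) → ℝ) (α : σ →₀ ℕ) : extz z (α + α) = z α := by
  rw [extz, if_pos (by intro q; simp; omega), half_double]

lemma extz_odd {σ : Type*} (z : (σ →₀ ℕ) → ℝ) {β : σ →₀ ℕ} (h : ∃ q, Odd (β q)) :
    extz z β = 0 := by
  rw [extz, if_neg]
  obtain ⟨q, hq⟩ := h
  intro hc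
  have := hc q
  have := Nat.odd_iff.mp hq
  omega

lemma even_eq_double {σ : Type*} {β : σ →₀ ℕ} (h : ∀ q, β q % 2 = 0) :
    β = half β + half β := by
  ext q; have := h q; simp [half_apply]; omega

set_option linter.unusedSectionVars false

section Dbl
variable {σ : Type*} [DecidableEq σ]

noncomputable def indI (I : Finset σ) : σ →₀ ℕ := ∑ q ∈ I, Finsupp.single q 1

lemma indI_apply (I : Finset σ) (q : σ) : indI I q = if q ∈ I then 1 else 0 := by
  rw [indI, Finset.sum_apply']
  simp only [Finsupp.single_apply]
  rw [Finset.sum_ite_eq' I q (fun _ => 1)]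

lemma mdeg_indI (I : Finset σ) : mdeg (indI I) = I.card := by
  induction I using Finset.cons_induction with
  | empty => simp [indI, mdeg_zero]
  | cons a s ha ih =>
    rw [indI, Finset.sum_cons, mdeg_add, mdeg_single, ← indI, ih, Finset.card_cons]
    omega

noncomputable def dbl : MvPolynomial σ ℝ →ₐ[ℝ] MvPolynomial σ ℝ :=
  MvPolynomial.aeval fun q => MvPolynomial.X q ^ 2

lemma dbl_monomial (α : σ →₀ ℕ) (c : ℝ) :
    dbl (monomial α c) = monomial (α + α) c := by
  rw [dbl, aeval_monomial, monomial_eq,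
    Finsupp.prod_add_index' (fun a => pow_zero _) (fun a b₁ b₂ => pow_add _ _ _)]
  have : (α.prod fun n e => (X n ^ 2 : MvPolynomial σ ℝ) ^ e)
      = (α.prod fun n e => (X n : MvPolynomial σ ℝ) ^ e) * α.prod fun n e => (X n : MvPolynomial σ ℝ) ^ e := by
    rw [← Finsupp.prod_mul]
    exact Finsupp.prod_congr fun q _ => by rw [← pow_mul, two_mul, pow_add]
  rw [this, MvPolynomial.algebraMap_eq]

lemma riesz_dbl (z : (σ →₀ ℕ) → ℝ) (f : MvPolynomial σ ℝ) :
    riesz (extz z) (dbl f) = riesz z f := by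
  have hd : dbl f = ∑ v ∈ f.support, monomial (v + v) (coeff v f) := by
    conv_lhs => rw [f.as_sum]
    rw [map_sum]
    exact Finset.sum_congr rfl fun v _ => dbl_monomial v _
  rw [hd, riesz_sum]
  simp only [riesz_monomial, extz_double]
  rfl

/-- parity pattern of a multi-index -/
def par (β : σ →₀ ℕ) : Finset σ := β.support.filter fun q => β q % 2 = 1

lemma indI_par_apply (β : σ →₀ ℕ) (q : σ) :
    indI (par β) q = β q % 2 := by
  rw [indI_apply, par]
  by_cases h : β q % 2 = 1
  · rw [if_pos]
    · omega
    · simp only [Finset.mem_filter, Finsupp.mem_support_iff]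
      exact ⟨by omega, h⟩
  · rw [if_neg]
    · omega
    · simp only [Finset.mem_filter]
      tauto

lemma par_recon (β : σ →₀ ℕ) : indI (par β) + (half β + half β) = β := by
  ext q
  have h1 := indI_par_apply β q
  simp only [Finsupp.add_apply, half_apply]
  omega

lemma card_par_le (β : σ →₀ ℕ) : (par β).card ≤ mdeg β := by
  rw [mdeg_eq_sum]
  calc (par β).card = ∑ _q ∈ par β, 1 := (Finset.card_eq_sum_ones _)
  _ ≤ ∑ q ∈ par β, β q := Finset.sum_le_sum fun q hq => by
      simp only [par, Finset.mem_filter] at hq; omega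
  _ ≤ ∑ q ∈ β.support, β q := Finset.sum_le_sum_of_subset (Finset.filter_subset _ _)

lemma mdeg_par (β : σ →₀ ℕ) : mdeg β = (par β).card + 2 * mdeg (half β) := by
  conv_lhs => rw [← par_recon β]
  rw [mdeg_add, mdeg_add, mdeg_indI]
  omega

end Dbl

section PSD
variable {a b r : ℕ} {μ : Fin a → ℝ} {ν : Fin b → ℝ} {z : ((Fin a × Fin b) →₀ ℕ) → ℝ}

lemma eI_eq_monomial (I : Finset (Fin a × Fin b)) : eI I = monomial (indI I) 1 := by
  induction I using Finset.cons_induction with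
  | empty => simp [eI, indI]
  | cons q s hq ih =>
    rw [eI, Finset.prod_cons, ← eI, ih]
    simp only [indI, Finset.sum_cons]
    rw [X, monomial_mul, mul_one]

lemma extz_psd (hr : 0 < r) (hz : SFeas a b r μ ν z) :
    ∀ p : MvPolynomial (Fin a × Fin b) ℝ, p.totalDegree ≤ 2 * r →
    0 ≤ riesz (extz z) (p ^ 2) := by
  intro p hp
  classical
  set T : Finset (Finset (Fin a × Fin b)) := p.support.image par with hT
  set qI : Finset (Fin a × Fin b) → MvPolynomial (Fin a × Fin b) ℝ :=
    fun I => ∑ β ∈ p.support.filter (fun β => par β = I), monomial (half β) (coeff β p) with hqI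
  set sI : Finset (Fin a × Fin b) → MvPolynomial (Fin a × Fin b) ℝ :=
    fun I => monomial (indI I) 1 * dbl (qI I) with hsI
  have claim1 : ∀ I, sI I = ∑ β ∈ p.support.filter (fun β => par β = I), monomial β (coeff β p) := by
    intro I
    rw [hsI, hqI]
    simp only
    rw [map_sum, Finset.mul_sum]
    refine Finset.sum_congr rfl fun β hβ => ?_
    rw [Finset.mem_filter] at hβ
    rw [dbl_monomial, monomial_mul, one_mul, ← hβ.2, par_recon]
  have claim2 : p = ∑ I ∈ T, sI I := by
    conv_lhs => rw [p.as_sum]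
    rw [← Finset.sum_fiberwise_of_maps_to (g := par) (t := T)
      (fun β hβ => Finset.mem_image_of_mem par hβ) (fun β => monomial β (coeff β p))]
    exact Finset.sum_congr rfl fun I _ => (claim1 I).symm
  have cross : ∀ I ∈ T, ∀ J ∈ T, I ≠ J → riesz (extz z) (sI I * sI J) = 0 := by
    intro I _ J _ hIJ
    have hform : sI I * sI J = monomial (indI I + indI J) 1 * dbl (qI I * qI J) := by
      rw [hsI]; simp only
      rw [map_mul]
      trans (monomial (indI I) 1 * monomial (indI J) 1 : MvPolynomial (Fin a × Fin b) ℝ) * (dbl (qI I) * dbl (qI J))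
      · ring
      · rw [monomial_mul, one_mul]
    rw [hform]
    refine riesz_eq_zero fun γ hγ => ?_
    have hγ' := MvPolynomial.support_mul _ _ hγ
    rw [Finset.mem_add] at hγ'
    obtain ⟨e, he, w, hw, rfl⟩ := hγ'
    rw [MvPolynomial.support_monomial, if_neg one_ne_zero] at he
    rw [Finset.mem_singleton] at he
    subst he
    -- w ∈ support (dbl (qI I * qI J)) hence w = v + v
    have hw' : ∃ v, w = v + v := by
      have hrepr : dbl (qI I * qI J) = ∑ v ∈ (qI I * qI J).support, monomial (v + v) (coeff v (qI I * qI J)) := by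
        conv_lhs => rw [(qI I * qI J).as_sum]
        rw [map_sum]
        exact Finset.sum_congr rfl fun v _ => dbl_monomial v _
      rw [hrepr] at hw
      have := MvPolynomial.support_sum hw
      rw [Finset.mem_biUnion] at this
      obtain ⟨v, _, hv⟩ := this
      rw [MvPolynomial.support_monomial] at hv
      by_cases hc : coeff v (qI I * qI J) = 0
      · rw [if_pos hc] at hv; simp at hv
      · rw [if_neg hc, Finset.mem_singleton] at hv; exact ⟨v, hv⟩
    obtain ⟨v, rfl⟩ := hw'
    -- find q0 in symmetric difference
    have hq0 : ∃ q0, (q0 ∈ I ∧ q0 ∉ J) ∨ (q0 ∈ J ∧ q0 ∉ I) := by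
      by_contra hc
      push_neg at hc
      exact hIJ (Finset.ext fun q => by have := hc q; tauto)
    obtain ⟨q0, hq0⟩ := hq0
    refine extz_odd z ⟨q0, ?_⟩
    have e1 := indI_apply I q0
    have e2 := indI_apply J q0
    simp only [Finsupp.add_apply, Nat.odd_iff]
    rcases hq0 with ⟨h1, h2⟩ | ⟨h1, h2⟩
    · rw [if_pos h1] at e1; rw [if_neg h2] at e2; omega
    · rw [if_neg h2] at e1; rw [if_pos h1] at e2; omega
  have diag : ∀ I ∈ T, 0 ≤ riesz (extz z) (sI I * sI I) := by
    intro I hI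
    have hform : sI I * sI I = dbl (eI I * qI I ^ 2) := by
      rw [hsI]; simp only
      rw [eI_eq_monomial, map_mul, map_pow, dbl_monomial]
      trans (monomial (indI I) 1 * monomial (indI I) 1 : MvPolynomial (Fin a × Fin b) ℝ) * (dbl (qI I) * dbl (qI I))
      · ring
      · rw [monomial_mul, one_mul, sq]
    rw [hform, riesz_dbl]
    -- get a witness β0 with par β0 = I
    rw [hT, Finset.mem_image] at hI
    obtain ⟨β0, hβ0, rfl⟩ := hI
    have hcard : (par β0).card ≤ 2 * r :=
      le_trans (card_par_le β0) (le_trans (le_totalDegree hβ0) hp)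
    refine hz.2.1 (par β0) hcard (qI (par β0)) ?_
    refine le_trans (totalDegree_finset_sum _ _) (Finset.sup_le fun β hβ => ?_)
    rw [Finset.mem_filter] at hβ
    refine le_trans (totalDegree_monomial_le _ _) ?_
    have h1 : mdeg β = (par β0).card + 2 * mdeg (half β) := by
      rw [← hβ.2]; exact mdeg_par β
    have h2 : mdeg β ≤ 2 * r := le_trans (le_totalDegree hβ.1) hp
    have h3 : (par β0).card ≤ 2 * r := hcard
    show (half β).sum (fun _ => id) ≤ r - ((par β0).card + 1) / 2
    have : (half β).sum (fun _ => id) = mdeg (half β) := rfl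
    rw [this]
    omega
  -- assemble
  have expand : riesz (extz z) (p ^ 2) = ∑ I ∈ T, ∑ J ∈ T, riesz (extz z) (sI I * sI J) := by
    conv_lhs => rw [claim2]
    rw [sq, Finset.sum_mul_sum]
    rw [riesz_sum]
    exact Finset.sum_congr rfl fun I _ => riesz_sum _ _ _
  rw [expand]
  refine Finset.sum_nonneg fun I hI => ?_
  rw [Finset.sum_eq_single I (fun J hJ hne => cross I hI J hJ (Ne.symm hne)) (fun h => (h hI).elim)]
  exact diag I hI

section Vanish
variable {a b r : ℕ} {μ : Fin a → ℝ} {ν : Fin b → ℝ} {z : ((Fin a × Fin b) →₀ ℕ) → ℝ}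

lemma mdeg_eq_one {σ : Type*} {η : σ →₀ ℕ} (h : mdeg η = 1) : ∃ q, η = Finsupp.single q 1 := by
  have hne : η ≠ 0 := fun h0 => by simp [h0, mdeg_zero] at h
  obtain ⟨q, hq⟩ := Finsupp.support_nonempty_iff.mpr hne
  have hq1 : 1 ≤ η q := Nat.one_le_iff_ne_zero.mpr (Finsupp.mem_support_iff.mp hq)
  rw [mdeg_eq_sum] at h
  have hsplit : (∑ x ∈ η.support.erase q, η x) + η q = ∑ x ∈ η.support, η x :=
    Finset.sum_erase_add _ _ hq
  have hz0 : ∀ q' ∈ η.support.erase q, η q' = 0 :=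
    Finset.sum_eq_zero_iff.mp (by omega)
  refine ⟨q, Finsupp.ext fun x => ?_⟩
  rw [Finsupp.single_apply]
  by_cases hx : q = x
  · subst hx; rw [if_pos rfl]; omega
  · rw [if_neg hx]
    by_cases hxs : x ∈ η.support
    · exact hz0 x (Finset.mem_erase.mpr ⟨fun hc => hx hc.symm, hxs⟩)
    · exact Finsupp.notMem_support_iff.mp hxs

lemma riesz_rowPoly (w : ((Fin a × Fin b) →₀ ℕ) → ℝ) (i : Fin a) (η : (Fin a × Fin b) →₀ ℕ) :
    riesz w (rowPoly a b μ i * monomial η 1)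
      = (∑ j, w (η + Finsupp.single (i, j) 1)) - μ i * w η := by
  have hpoly : rowPoly a b μ i * monomial η 1
      = (∑ j, monomial (η + Finsupp.single (i, j) 1) 1) - monomial η (μ i) := by
    rw [rowPoly, sub_mul, Finset.sum_mul, C_mul_monomial, mul_one]
    congr 1
    refine Finset.sum_congr rfl fun j _ => ?_
    rw [X, monomial_mul, one_mul, add_comm]
  rw [hpoly, riesz_sub, riesz_sum, riesz_monomial]
  simp only [riesz_monomial, one_mul]

lemma riesz_colPoly (w : ((Fin a × Fin b) →₀ ℕ) → ℝ) (j : Fin b) (η : (Fin a × Fin b) →₀ ℕ) :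
    riesz w (colPoly a b ν j * monomial η 1)
      = (∑ i, w (η + Finsupp.single (i, j) 1)) - ν j * w η := by
  have hpoly : colPoly a b ν j * monomial η 1
      = (∑ i, monomial (η + Finsupp.single (i, j) 1) 1) - monomial η (ν j) := by
    rw [colPoly, sub_mul, Finset.sum_mul, C_mul_monomial, mul_one]
    congr 1
    refine Finset.sum_congr rfl fun i _ => ?_
    rw [X, monomial_mul, one_mul, add_comm]
  rw [hpoly, riesz_sub, riesz_sum, riesz_monomial]
  simp only [riesz_monomial, one_mul]

lemma row_vanish (hr : 0 < r) (hz : SFeas a b r μ ν z) (i : Fin a)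
    (η : (Fin a × Fin b) →₀ ℕ) (hη : mdeg η ≤ 2 * r - 1) :
    (∑ j, z (η + Finsupp.single (i, j) 1)) - μ i * z η = 0 := by
  by_cases hcase : mdeg η ≤ 2 * (r - 1)
  · obtain ⟨η₁, η₂, rfl, h1, h2⟩ := mdeg_split (r - 1) (r - 1) η (by omega)
    have h0 := hz.2.2.1 i η₁ η₂ h1 h2
    rw [← riesz_rowPoly]
    rw [mul_assoc, monomial_mul, one_mul] at h0
    exact h0
  · obtain ⟨η₀, η', hsum, h0, h1⟩ := mdeg_split 1 (2 * r - 2) η (by omega)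
    have hη'd : mdeg η = mdeg η₀ + mdeg η' := by rw [hsum, mdeg_add]
    have hη0 : mdeg η₀ = 1 := by omega
    obtain ⟨q0, rfl⟩ := mdeg_eq_one hη0
    obtain ⟨η₁, η₂, rfl, h2, h3⟩ := mdeg_split (r - 1) (r - 1) η' (by omega)
    have h4 := hz.2.2.2.2.1 i q0.1 q0.2 η₁ η₂ h2 h3
    rw [← riesz_rowPoly]
    have hmon : (X q0 : MvPolynomial (Fin a × Fin b) ℝ) * monomial η₁ 1 * monomial η₂ 1
        = monomial η 1 := by
      rw [X, monomial_mul, monomial_mul, one_mul, one_mul, hsum, add_assoc]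
    rw [show rowPoly a b μ i * X (q0.1, q0.2) * monomial η₁ 1 * monomial η₂ 1
        = rowPoly a b μ i * (X q0 * monomial η₁ 1 * monomial η₂ 1) by ring] at h4
    rw [hmon] at h4
    exact h4

lemma col_vanish (hr : 0 < r) (hz : SFeas a b r μ ν z) (j : Fin b)
    (η : (Fin a × Fin b) →₀ ℕ) (hη : mdeg η ≤ 2 * r - 1) :
    (∑ i, z (η + Finsupp.single (i, j) 1)) - ν j * z η = 0 := by
  by_cases hcase : mdeg η ≤ 2 * (r - 1)
  · obtain ⟨η₁, η₂, rfl, h1, h2⟩ := mdeg_split (r - 1) (r - 1) η (by omega)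
    have h0 := hz.2.2.2.1 j η₁ η₂ h1 h2
    rw [← riesz_colPoly]
    rw [mul_assoc, monomial_mul, one_mul] at h0
    exact h0
  · obtain ⟨η₀, η', hsum, h0, h1⟩ := mdeg_split 1 (2 * r - 2) η (by omega)
    have hη'd : mdeg η = mdeg η₀ + mdeg η' := by rw [hsum, mdeg_add]
    have hη0 : mdeg η₀ = 1 := by omega
    obtain ⟨q0, rfl⟩ := mdeg_eq_one hη0
    obtain ⟨η₁, η₂, rfl, h2, h3⟩ := mdeg_split (r - 1) (r - 1) η' (by omega)
    have h4 := hz.2.2.2.2.2 j q0.2 q0.1 η₁ η₂ h2 h3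
    rw [← riesz_colPoly]
    have hmon : (X q0 : MvPolynomial (Fin a × Fin b) ℝ) * monomial η₁ 1 * monomial η₂ 1
        = monomial η 1 := by
      rw [X, monomial_mul, monomial_mul, one_mul, one_mul, hsum, add_assoc]
    rw [show colPoly a b ν j * X (q0.1, q0.2) * monomial η₁ 1 * monomial η₂ 1
        = colPoly a b ν j * (X q0 * monomial η₁ 1 * monomial η₂ 1) by ring] at h4
    rw [hmon] at h4
    exact h4

/-- riesz of the Putinar row localizer against a product of monomials. -/
lemma riesz_Pg_row (w : ((Fin a × Fin b) →₀ ℕ) → ℝ) (c : ℝ) (i : Fin a)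
    (α β : (Fin a × Fin b) →₀ ℕ) :
    riesz w ((C c - ∑ j, X (i, j) ^ 2) * monomial α 1 * monomial β 1)
      = c * w (α + β) - ∑ j, w (α + β + Finsupp.single (i, j) 2) := by
  have hpoly : (C c - ∑ j, (X (i, j) : MvPolynomial (Fin a × Fin b) ℝ) ^ 2)
        * monomial α 1 * monomial β 1
      = monomial (α + β) c - ∑ j, monomial (α + β + Finsupp.single (i, j) 2) 1 := by
    rw [sub_mul, sub_mul, mul_assoc, monomial_mul, one_mul, C_mul_monomial, mul_one,
      Finset.sum_mul, Finset.sum_mul]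
    congr 1
    refine Finset.sum_congr rfl fun j _ => ?_
    rw [X_pow_eq_monomial, mul_assoc, monomial_mul, one_mul, monomial_mul, one_mul, add_comm]
  rw [hpoly, riesz_sub, riesz_sum, riesz_monomial]
  simp only [riesz_monomial, one_mul]

lemma riesz_Pg_col (w : ((Fin a × Fin b) →₀ ℕ) → ℝ) (c : ℝ) (j : Fin b)
    (α β : (Fin a × Fin b) →₀ ℕ) :
    riesz w ((C c - ∑ i, X (i, j) ^ 2) * monomial α 1 * monomial β 1)
      = c * w (α + β) - ∑ i, w (α + β + Finsupp.single (i, j) 2) := by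
  have hpoly : (C c - ∑ i, (X (i, j) : MvPolynomial (Fin a × Fin b) ℝ) ^ 2)
        * monomial α 1 * monomial β 1
      = monomial (α + β) c - ∑ i, monomial (α + β + Finsupp.single (i, j) 2) 1 := by
    rw [sub_mul, sub_mul, mul_assoc, monomial_mul, one_mul, C_mul_monomial, mul_one,
      Finset.sum_mul, Finset.sum_mul]
    congr 1
    refine Finset.sum_congr rfl fun i _ => ?_
    rw [X_pow_eq_monomial, mul_assoc, monomial_mul, one_mul, monomial_mul, one_mul, add_comm]
  rw [hpoly, riesz_sub, riesz_sum, riesz_monomial]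
  simp only [riesz_monomial, one_mul]

lemma extz_row_zero (hr : 0 < r) (hz : SFeas a b r μ ν z) (i : Fin a)
    (γ : (Fin a × Fin b) →₀ ℕ) (hγ : mdeg γ ≤ 4 * r - 2) :
    μ i * extz z γ - ∑ j, extz z (γ + Finsupp.single (i, j) 2) = 0 := by
  by_cases hall : ∀ q, γ q % 2 = 0
  · have hγeq := even_eq_double hall
    have hev : extz z γ = z (half γ) := by conv_lhs => rw [hγeq, extz_double]
    have hterm : ∀ j : Fin b, extz z (γ + Finsupp.single (i, j) 2)
        = z (half γ + Finsupp.single (i, j) 1) := by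
      intro j
      have hidx : γ + Finsupp.single (i, j) 2
          = (half γ + Finsupp.single (i, j) 1) + (half γ + Finsupp.single (i, j) 1) := by
        ext x
        have := hall x
        simp only [Finsupp.add_apply, half_apply, Finsupp.single_apply]
        by_cases hx : (i, j) = x <;> simp [hx] <;> omega
      rw [hidx, extz_double]
    rw [hev]
    simp only [hterm]
    have hmd : mdeg γ = 2 * mdeg (half γ) := by
      conv_lhs => rw [hγeq, mdeg_half_double]
    have := row_vanish hr hz i (half γ) (by omega)
    linarith
  · push_neg at hall
    obtain ⟨q, hq⟩ := hall
    have hodd : extz z γ = 0 := extz_odd z ⟨q, by rw [Nat.odd_iff]; omega⟩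
    have hterm : ∀ j : Fin b, extz z (γ + Finsupp.single (i, j) 2) = 0 := by
      intro j
      refine extz_odd z ⟨q, ?_⟩
      rw [Nat.odd_iff]
      simp only [Finsupp.add_apply, Finsupp.single_apply]
      by_cases hx : (i, j) = q <;> simp [hx] <;> omega
    rw [hodd]
    simp only [hterm]
    simp

lemma extz_col_zero (hr : 0 < r) (hz : SFeas a b r μ ν z) (j : Fin b)
    (γ : (Fin a × Fin b) →₀ ℕ) (hγ : mdeg γ ≤ 4 * r - 2) :
    ν j * extz z γ - ∑ i, extz z (γ + Finsupp.single (i, j) 2) = 0 := by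
  by_cases hall : ∀ q, γ q % 2 = 0
  · have hγeq := even_eq_double hall
    have hev : extz z γ = z (half γ) := by conv_lhs => rw [hγeq, extz_double]
    have hterm : ∀ i : Fin a, extz z (γ + Finsupp.single (i, j) 2)
        = z (half γ + Finsupp.single (i, j) 1) := by
      intro i
      have hidx : γ + Finsupp.single (i, j) 2
          = (half γ + Finsupp.single (i, j) 1) + (half γ + Finsupp.single (i, j) 1) := by
        ext x
        have := hall x
        simp only [Finsupp.add_apply, half_apply, Finsupp.single_apply]
        by_cases hx : (i, j) = x <;> simp [hx] <;> omega
      rw [hidx, extz_double]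
    rw [hev]
    simp only [hterm]
    have hmd : mdeg γ = 2 * mdeg (half γ) := by
      conv_lhs => rw [hγeq, mdeg_half_double]
    have := col_vanish hr hz j (half γ) (by omega)
    linarith
  · push_neg at hall
    obtain ⟨q, hq⟩ := hall
    have hodd : extz z γ = 0 := extz_odd z ⟨q, by rw [Nat.odd_iff]; omega⟩
    have hterm : ∀ i : Fin a, extz z (γ + Finsupp.single (i, j) 2) = 0 := by
      intro i
      refine extz_odd z ⟨q, ?_⟩
      rw [Nat.odd_iff]
      simp only [Finsupp.add_apply, Finsupp.single_apply]
      by_cases hx : (i, j) = q <;> simp [hx] <;> omega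
    rw [hodd]
    simp only [hterm]
    simp

/-- The canonical extension of an S-feasible point is P-feasible. -/
lemma extz_feas (hr : 0 < r) (hz : SFeas a b r μ ν z) :
    PFeas a b (2 * r) μ ν (extz z) := by
  refine ⟨?_, ?_, ?_, ?_⟩
  · have := extz_double z 0
    rw [add_zero] at this
    rw [this, hz.1]
  · intro p hp
    rw [one_mul]
    exact extz_psd hr hz p hp
  · intro i α β hα hβ
    rw [riesz_Pg_row]
    exact extz_row_zero hr hz i (α + β) (by rw [mdeg_add]; omega)
  · intro j α β hα hβ
    rw [riesz_Pg_col]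
    exact extz_col_zero hr hz j (α + β) (by rw [mdeg_add]; omega)

lemma double_single_pair (i : Fin a) (j : Fin b) (k : Fin a) (l : Fin b) :
    Finsupp.single ((i, j) : Fin a × Fin b) 2 + Finsupp.single (k, l) 2
      = (Finsupp.single (i, j) 1 + Finsupp.single (k, l) 1)
        + (Finsupp.single (i, j) 1 + Finsupp.single (k, l) 1) := by
  have h1 : (Finsupp.single ((i, j) : Fin a × Fin b) 2)
      = Finsupp.single (i, j) 1 + Finsupp.single (i, j) 1 := by
    rw [← Finsupp.single_add]
  have h2 : (Finsupp.single ((k, l) : Fin a × Fin b) 2)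
      = Finsupp.single (k, l) 1 + Finsupp.single (k, l) 1 := by
    rw [← Finsupp.single_add]
  rw [h1, h2]
  abel

lemma extz_obj (L : Fin a → Fin b → Fin a → Fin b → ℝ) :
    objP a b L (extz z) = objS a b L z := by
  unfold objP objS
  refine Finset.sum_congr rfl fun i _ => Finset.sum_congr rfl fun j _ =>
    Finset.sum_congr rfl fun k _ => Finset.sum_congr rfl fun l _ => ?_
  rw [double_single_pair, extz_double]

end Vanish

section Bound
variable {a b r : ℕ} {μ : Fin a → ℝ} {ν : Fin b → ℝ}

lemma single_two (q : Fin a × Fin b) :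
    (Finsupp.single q 2 : (Fin a × Fin b) →₀ ℕ) = Finsupp.single q 1 + Finsupp.single q 1 := by
  rw [← Finsupp.single_add]

lemma PFeas_nonneg (hr : 0 < r) {w : ((Fin a × Fin b) →₀ ℕ) → ℝ}
    (hw : PFeas a b (2 * r) μ ν w) (α : (Fin a × Fin b) →₀ ℕ) (hα : mdeg α ≤ 2 * r) :
    0 ≤ w (α + α) := by
  have h := hw.2.1 (monomial α 1) (le_trans (totalDegree_monomial_le α 1) hα)
  rw [one_mul, sq, monomial_mul, one_mul, riesz_monomial, one_mul] at h
  exact h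

lemma PFeas_bound01 (hr : 0 < r) (hμ : IsProbVec μ) (hν : IsProbVec ν)
    {w : ((Fin a × Fin b) →₀ ℕ) → ℝ} (hw : PFeas a b (2 * r) μ ν w)
    (i k : Fin a) (j l : Fin b) :
    0 ≤ w (Finsupp.single (i, j) 2 + Finsupp.single (k, l) 2) ∧
      w (Finsupp.single (i, j) 2 + Finsupp.single (k, l) 2) ≤ 1 := by
  have hnn : 0 ≤ w (Finsupp.single (i, j) 2 + Finsupp.single (k, l) 2) := by
    rw [double_single_pair]
    exact PFeas_nonneg hr hw _ (by rw [mdeg_add, mdeg_single, mdeg_single]; omega)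
  refine ⟨hnn, ?_⟩
  -- column sums
  have hA : ∀ k' : Fin a, 0 ≤ w (Finsupp.single ((k', l) : Fin a × Fin b) 2) := by
    intro k'
    rw [single_two]
    exact PFeas_nonneg hr hw _ (by rw [mdeg_single]; omega)
  have hcol := hw.2.2.2 l 0 0 (by rw [mdeg_zero]; omega) (by rw [mdeg_zero]; omega)
  rw [riesz_Pg_col] at hcol
  rw [add_zero, hw.1, mul_one] at hcol
  simp only [zero_add] at hcol
  have hAsum : ∑ k', w (Finsupp.single ((k', l) : Fin a × Fin b) 2) = ν l := by linarith
  have hAle : w (Finsupp.single ((k, l) : Fin a × Fin b) 2) ≤ ν l := by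
    rw [← hAsum]
    exact Finset.single_le_sum (fun k' _ => hA k') (Finset.mem_univ k)
  -- row sums at base point δkl + δkl
  have hB : ∀ j' : Fin b,
      0 ≤ w (Finsupp.single ((k, l) : Fin a × Fin b) 1 + Finsupp.single (k, l) 1
        + Finsupp.single (i, j') 2) := by
    intro j'
    have hidx : (Finsupp.single ((k, l) : Fin a × Fin b) 1 + Finsupp.single (k, l) 1
          + Finsupp.single (i, j') 2)
        = (Finsupp.single (i, j') 1 + Finsupp.single (k, l) 1)
          + (Finsupp.single (i, j') 1 + Finsupp.single (k, l) 1) := by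
      rw [single_two]
      abel
    rw [hidx]
    exact PFeas_nonneg hr hw _ (by rw [mdeg_add, mdeg_single, mdeg_single]; omega)
  have hrow := hw.2.2.1 i (Finsupp.single (k, l) 1) (Finsupp.single (k, l) 1)
    (by rw [mdeg_single]; omega) (by rw [mdeg_single]; omega)
  rw [riesz_Pg_row] at hrow
  have hbase : w (Finsupp.single ((k, l) : Fin a × Fin b) 1 + Finsupp.single (k, l) 1)
      = w (Finsupp.single ((k, l) : Fin a × Fin b) 2) := by rw [single_two]
  have htarget : (Finsupp.single ((i, j) : Fin a × Fin b) 2 + Finsupp.single (k, l) 2)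
      = Finsupp.single ((k, l) : Fin a × Fin b) 1 + Finsupp.single (k, l) 1
        + Finsupp.single (i, j) 2 := by
    rw [single_two (k, l)]
    abel
  have hle : w (Finsupp.single ((i, j) : Fin a × Fin b) 2 + Finsupp.single (k, l) 2)
      ≤ μ i * w (Finsupp.single ((k, l) : Fin a × Fin b) 2) := by
    rw [htarget]
    have hsum : ∑ j', w (Finsupp.single ((k, l) : Fin a × Fin b) 1 + Finsupp.single (k, l) 1
          + Finsupp.single (i, j') 2)
        = μ i * w (Finsupp.single ((k, l) : Fin a × Fin b) 2) := by
      rw [← hbase]; linarith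
    rw [← hsum]
    exact Finset.single_le_sum (fun j' _ => hB j') (Finset.mem_univ j)
  have hμi1 : μ i ≤ 1 := by
    have := Finset.single_le_sum (fun i' (_ : i' ∈ Finset.univ) => hμ.1 i') (Finset.mem_univ i)
    rw [hμ.2] at this
    exact this
  have hνl1 : ν l ≤ 1 := by
    have := Finset.single_le_sum (fun j' (_ : j' ∈ Finset.univ) => hν.1 j') (Finset.mem_univ l)
    rw [hν.2] at this
    exact this
  nlinarith [hμ.1 i, hν.1 l, hA k]

lemma PFeas_obj_bound (hr : 0 < r) (hμ : IsProbVec μ) (hν : IsProbVec ν)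
    (L : Fin a → Fin b → Fin a → Fin b → ℝ)
    {w : ((Fin a × Fin b) →₀ ℕ) → ℝ} (hw : PFeas a b (2 * r) μ ν w) :
    -(∑ i, ∑ j, ∑ k, ∑ l, |L i j k l|) ≤ objP a b L w := by
  unfold objP
  have key : ∀ (i : Fin a) (j : Fin b) (k : Fin a) (l : Fin b),
      -|L i j k l| ≤ L i j k l * w (Finsupp.single (i, j) 2 + Finsupp.single (k, l) 2) := by
    intro i j k l
    obtain ⟨h0, h1⟩ := PFeas_bound01 hr hμ hν hw i k j l
    set t := w (Finsupp.single ((i, j) : Fin a × Fin b) 2 + Finsupp.single (k, l) 2)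
    nlinarith [neg_abs_le (L i j k l), abs_nonneg (L i j k l),
      mul_nonneg (by linarith [neg_abs_le (L i j k l)] : (0:ℝ) ≤ L i j k l + |L i j k l|) h0,
      mul_nonneg (abs_nonneg (L i j k l)) (by linarith : (0:ℝ) ≤ 1 - t)]
  calc -(∑ i, ∑ j, ∑ k, ∑ l, |L i j k l|) = ∑ i, ∑ j, ∑ k, ∑ l, -|L i j k l| := by
        simp only [Finset.sum_neg_distrib]
  _ ≤ _ := Finset.sum_le_sum fun i _ => Finset.sum_le_sum fun j _ =>
        Finset.sum_le_sum fun k _ => Finset.sum_le_sum fun l _ => key i j k l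

end Bound
/-- The extension `Q(z)` defined by `Q(z)_{2α} = z_α` and `Q(z)_β = 0`
whenever `β` has an odd coordinate maps feasible points of (S-DGW-r) to feasible
points of (P-DGW-2r) with the same objective value; consequently
val(P-DGW-2r) ≤ val(S-DGW-r). -/
theorem stmt2 (m n r : ℕ) (hm : 0 < m) (hn : 0 < n) (hr : 0 < r)
    (μ : Fin m → ℝ) (ν : Fin n → ℝ) (hμ : IsProbVec μ) (hν : IsProbVec ν)
    (L : Fin m → Fin n → Fin m → Fin n → ℝ)
    (z : ((Fin m × Fin n) →₀ ℕ) → ℝ) (hz : SFeas m n r μ ν z)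
    (Qz : ((Fin m × Fin n) →₀ ℕ) → ℝ)
    (hQeven : ∀ α : (Fin m × Fin n) →₀ ℕ, mdeg α ≤ 2 * r → Qz (α + α) = z α)
    (hQodd : ∀ β : (Fin m × Fin n) →₀ ℕ, (∃ q, Odd (β q)) → Qz β = 0) :
    PFeas m n (2 * r) μ ν Qz ∧
    objP m n L Qz = objS m n L z ∧
    valP m n (2 * r) μ ν L ≤ valS m n r μ ν L := by
  have agree : ∀ γ : (Fin m × Fin n) →₀ ℕ, mdeg γ ≤ 4 * r → Qz γ = extz z γ := by
    intro γ hγ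
    by_cases hall : ∀ q, γ q % 2 = 0
    · have hγeq := even_eq_double hall
      have hmd : mdeg γ = 2 * mdeg (half γ) := by
        conv_lhs => rw [hγeq, mdeg_half_double]
      calc Qz γ = Qz (half γ + half γ) := by rw [← hγeq]
      _ = z (half γ) := hQeven _ (by omega)
      _ = extz z γ := by conv_rhs => rw [hγeq, extz_double]
    · push_neg at hall
      obtain ⟨q, hq⟩ := hall
      rw [hQodd γ ⟨q, Nat.odd_iff.mpr (by omega)⟩, extz_odd z ⟨q, Nat.odd_iff.mpr (by omega)⟩]
  have hfeas : PFeas m n (2 * r) μ ν Qz := by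
    refine ⟨?_, ?_, ?_, ?_⟩
    · have h0 := hQeven 0 (by rw [mdeg_zero]; exact Nat.zero_le _)
      rw [add_zero] at h0
      rw [h0, hz.1]
    · intro p hp
      rw [one_mul]
      have hcg : riesz Qz (p ^ 2) = riesz (extz z) (p ^ 2) := by
        refine riesz_congr fun γ hγ => agree γ ?_
        have h1 := le_mdeg_totalDegree hγ
        have h2 := totalDegree_pow p 2
        omega
      rw [hcg]
      exact extz_psd hr hz p hp
    · intro i α β hα hβ
      rw [riesz_Pg_row]
      have e1 : Qz (α + β) = extz z (α + β) := agree _ (by rw [mdeg_add]; omega)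
      have e2 : ∀ j : Fin n, Qz (α + β + Finsupp.single (i, j) 2)
          = extz z (α + β + Finsupp.single (i, j) 2) := fun j =>
        agree _ (by rw [mdeg_add, mdeg_add, mdeg_single]; omega)
      rw [e1]
      simp only [e2]
      exact extz_row_zero hr hz i (α + β) (by rw [mdeg_add]; omega)
    · intro j α β hα hβ
      rw [riesz_Pg_col]
      have e1 : Qz (α + β) = extz z (α + β) := agree _ (by rw [mdeg_add]; omega)
      have e2 : ∀ i : Fin m, Qz (α + β + Finsupp.single (i, j) 2)
          = extz z (α + β + Finsupp.single (i, j) 2) := fun i =>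
        agree _ (by rw [mdeg_add, mdeg_add, mdeg_single]; omega)
      rw [e1]
      simp only [e2]
      exact extz_col_zero hr hz j (α + β) (by rw [mdeg_add]; omega)
  have hobj : objP m n L Qz = objS m n L z := by
    unfold objP objS
    refine Finset.sum_congr rfl fun i _ => Finset.sum_congr rfl fun j _ =>
      Finset.sum_congr rfl fun k _ => Finset.sum_congr rfl fun l _ => ?_
    rw [double_single_pair, hQeven _ (by rw [mdeg_add, mdeg_single, mdeg_single]; omega)]
  refine ⟨hfeas, hobj, ?_⟩
  unfold valP valS
  refine csInf_le_csInf ?_ ⟨objS m n L z, z, hz, rfl⟩ ?_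
  · refine ⟨-(∑ i, ∑ j, ∑ k, ∑ l, |L i j k l|), fun v hv => ?_⟩
    obtain ⟨w, hw, rfl⟩ := hv
    exact PFeas_obj_bound hr hμ hν L hw
  · rintro v ⟨z', hz', rfl⟩
    exact ⟨extz z', extz_feas hr hz', (extz_obj L).symm⟩
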